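/- Let n be a positive integer, L = 4n+3, and define E(φ) = E↑(φ)+E↓(φ) with E↑(φ) = -2cos(φ/L) - 2∑_{l=1}^{n+1}cos((2lπ-φ)/L) - 2∑_{l=1}^{n}cos((2lπ+φ)/L) and E↓(φ) = -2cos(φ/L) - 2∑_{l=1}^{n}cos((2lπ-φ)/L) - 2∑_{l=1}^{n}cos((2lπ+φ)/L). Then the derivative of E with respect to φ vanishes at φ = π/2. -/

import Mathlib

open Real Finset

lemma tele (θ : ℝ) (n : ℕ) :
    2 * Real.sin (2*θ) * ∑ l ∈ Finset.Icc 1 n, Real.cos (4*l*θ)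
      = Real.sin ((4*n+2)*θ) - Real.sin (2*θ) := by
  induction n with
  | zero => simp
  | succ m ih =>
    rw [Finset.sum_Icc_succ_top (Nat.le_add_left 1 m)]
    have h : Real.sin ((4*((m:ℝ)+1)+2)*θ) - Real.sin ((4*(m:ℝ)+2)*θ)
        = 2 * Real.sin (2*θ) * Real.cos (4*((m:ℝ)+1)*θ) := by
      rw [Real.sin_sub_sin]
      ring_nf
    push_cast
    push_cast at ih
    nlinarith [h, ih]

lemma diffl (θ : ℝ) (l : ℝ) :
    Real.sin ((4*l+1)*θ) - Real.sin ((4*l-1)*θ) = 2 * Real.sin θ * Real.cos (4*l*θ) := by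
  rw [Real.sin_sub_sin]
  ring_nf

lemma key (n : ℕ) (L : ℝ) (hL : L = 4*n+3) :
    4 * Real.sin (π/2/L)
    - 2 * ∑ l ∈ Finset.Icc 1 (n+1), Real.sin ((2*l*π - π/2)/L)
    - 2 * ∑ l ∈ Finset.Icc 1 n, Real.sin ((2*l*π - π/2)/L)
    + 4 * ∑ l ∈ Finset.Icc 1 n, Real.sin ((2*l*π + π/2)/L) = 0 := by
  have hL0 : (0:ℝ) < L := by rw [hL]; positivity
  have hL1 : (1:ℝ) < L := by rw [hL]; have : (0:ℝ) ≤ (n:ℝ) := Nat.cast_nonneg n; linarith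
  set θ := π/(2*L) with hθ
  have harg1 : π/2/L = θ := by rw [hθ]; ring
  have hm : ∀ l : ℕ, (2*(l:ℝ)*π - π/2)/L = (4*(l:ℝ)-1)*θ := by
    intro l; rw [hθ]; field_simp; ring
  have hp : ∀ l : ℕ, (2*(l:ℝ)*π + π/2)/L = (4*(l:ℝ)+1)*θ := by
    intro l; rw [hθ]; field_simp; ring
  rw [harg1]
  simp only [hm, hp]
  have hsplit := Finset.sum_Icc_succ_top (Nat.le_add_left 1 n)
      (fun l : ℕ => Real.sin ((4*(l:ℝ)-1)*θ))
  have hS : ∑ l ∈ Finset.Icc 1 n, Real.sin ((4*(l:ℝ)+1)*θ)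
      - ∑ l ∈ Finset.Icc 1 n, Real.sin ((4*(l:ℝ)-1)*θ)
      = 2 * Real.sin θ * ∑ l ∈ Finset.Icc 1 n, Real.cos (4*(l:ℝ)*θ) := by
    rw [← Finset.sum_sub_distrib, Finset.mul_sum]
    exact Finset.sum_congr rfl fun l _ => diffl θ l
  have hcos : (0:ℝ) < Real.cos θ := by
    apply Real.cos_pos_of_mem_Ioo
    constructor
    · have : 0 < θ := by rw [hθ]; positivity
      linarith [Real.pi_pos]
    · rw [hθ]
      rw [div_lt_iff₀ (by linarith)]
      nlinarith [Real.pi_pos]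
  have h42 : Real.sin ((4*(n:ℝ)+2)*θ) = Real.cos θ := by
    rw [show ((4*(n:ℝ)+2)*θ) = π/2 - θ by rw [hθ, hL]; field_simp; ring,
      Real.sin_pi_div_two_sub]
  have hlast : Real.sin ((4*((n:ℝ)+1)-1)*θ) = 1 := by
    rw [show (4*((n:ℝ)+1)-1)*θ = π/2 by rw [hθ, hL]; field_simp; ring,
      Real.sin_pi_div_two]
  have hs2 : Real.sin (2*θ) = 2 * Real.sin θ * Real.cos θ := by
    rw [Real.sin_two_mul]
  have htele := tele θ n
  rw [hs2, h42] at htele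
  have h4 : 4 * Real.sin θ * ∑ l ∈ Finset.Icc 1 n, Real.cos (4*(l:ℝ)*θ)
      = 1 - 2*Real.sin θ := by
    apply mul_left_cancel₀ (ne_of_gt hcos)
    nlinarith [htele]
  rw [hsplit]
  push_cast
  push_cast at hlast
  rw [hlast]
  linear_combination 4*hS + 2*h4

theorem stmt_3 (n : ℕ) (hn : 0 < n) (L : ℝ) (hL : L = 4 * n + 3) :
    deriv (fun φ : ℝ =>
      ((-2) * Real.cos (φ / L)
        - 2 * ∑ l ∈ Finset.Icc 1 (n + 1), Real.cos ((2 * l * π - φ) / L)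
        - 2 * ∑ l ∈ Finset.Icc 1 n, Real.cos ((2 * l * π + φ) / L))
      +
      ((-2) * Real.cos (φ / L)
        - 2 * ∑ l ∈ Finset.Icc 1 n, Real.cos ((2 * l * π - φ) / L)
        - 2 * ∑ l ∈ Finset.Icc 1 n, Real.cos ((2 * l * π + φ) / L)))
      (π / 2) = 0 := by
  have h0 : HasDerivAt (fun φ : ℝ => Real.cos (φ / L)) (-Real.sin (π/2 / L) * (1/L)) (π/2) :=
    (Real.hasDerivAt_cos _).comp _ ((hasDerivAt_id _).div_const L)
  have hm : ∀ l : ℕ, HasDerivAt (fun φ : ℝ => Real.cos ((2 * l * π - φ) / L))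
      (-Real.sin ((2 * l * π - π/2) / L) * ((0-1)/L)) (π/2) := fun l =>
    (Real.hasDerivAt_cos _).comp _
      (((hasDerivAt_const _ (2*(l:ℝ)*π)).sub (hasDerivAt_id _)).div_const L)
  have hp : ∀ l : ℕ, HasDerivAt (fun φ : ℝ => Real.cos ((2 * l * π + φ) / L))
      (-Real.sin ((2 * l * π + π/2) / L) * ((0+1)/L)) (π/2) := fun l =>
    (Real.hasDerivAt_cos _).comp _
      (((hasDerivAt_const _ (2*(l:ℝ)*π)).add (hasDerivAt_id _)).div_const L)
  have hsm1 : HasDerivAt (fun φ : ℝ => ∑ l ∈ Finset.Icc 1 (n+1), Real.cos ((2 * l * π - φ) / L))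
      (∑ l ∈ Finset.Icc 1 (n+1), (-Real.sin ((2 * l * π - π/2) / L) * ((0-1)/L))) (π/2) :=
    HasDerivAt.fun_sum (fun l _ => hm l)
  have hsm2 : HasDerivAt (fun φ : ℝ => ∑ l ∈ Finset.Icc 1 n, Real.cos ((2 * l * π - φ) / L))
      (∑ l ∈ Finset.Icc 1 n, (-Real.sin ((2 * l * π - π/2) / L) * ((0-1)/L))) (π/2) :=
    HasDerivAt.fun_sum (fun l _ => hm l)
  have hsp : HasDerivAt (fun φ : ℝ => ∑ l ∈ Finset.Icc 1 n, Real.cos ((2 * l * π + φ) / L))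
      (∑ l ∈ Finset.Icc 1 n, (-Real.sin ((2 * l * π + π/2) / L) * ((0+1)/L))) (π/2) :=
    HasDerivAt.fun_sum (fun l _ => hp l)
  have hD := (((h0.const_mul (-2)).fun_sub (hsm1.const_mul 2)).fun_sub (hsp.const_mul 2)).fun_add
    (((h0.const_mul (-2)).fun_sub (hsm2.const_mul 2)).fun_sub (hsp.const_mul 2))
  rw [hD.deriv]
  have eA : ∀ m : ℕ, ∑ l ∈ Finset.Icc 1 m, (-Real.sin ((2*(l:ℝ)*π - π/2)/L) * ((0-1)/L))
      = (∑ l ∈ Finset.Icc 1 m, Real.sin ((2*(l:ℝ)*π - π/2)/L)) * (1/L) := by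
    intro m
    rw [← Finset.sum_mul, Finset.sum_neg_distrib]
    ring
  have eC : ∑ l ∈ Finset.Icc 1 n, (-Real.sin ((2*(l:ℝ)*π + π/2)/L) * ((0+1)/L))
      = (∑ l ∈ Finset.Icc 1 n, Real.sin ((2*(l:ℝ)*π + π/2)/L)) * (-(1/L)) := by
    rw [← Finset.sum_mul, Finset.sum_neg_distrib]
    ring
  rw [eA (n+1), eA n, eC]
  have hk := key n L hL
  linear_combination hk / L
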